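/- Fix a ∈ [1,3] and r ∈ (0,1/16], and coefficient functions a_k : {−1,1}^k → [1,a] (with a_0 ≡ 1) for 0 ≤ k ≤ n−1, where n ≥ 1. Let ε ∈ 𝓔_n, let x = f_n(ε) ∈ K_n, and let ε̂ = (ε_1,…,ε_{n−1}). Define Δ₃ = Σ_{ε′ ∈ 𝓔_{n−1}, ε′ ≠ ε̂} Σ_{s ∈ {−1,1}} ( ln|f_n(ε′ s) − x| − ln|f_{n−1}(ε′) − x| ), where ε′ s ∈ 𝓔_n denotes ε′ extended by the letter s in position n. Then |Δ₃| ≤ Σ_{ℓ=1}^{n−1} 2^{ℓ−1} a² r^{2ℓ} / ( 4(1 − ar/(1−r))² − a² r^{2ℓ} ). -/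

import Mathlib

noncomputable section

/-- The sign `±1 : ℝ` associated to a boolean letter. -/
def sgn (b : Bool) : ℝ := if b then 1 else -1

/-- `f_n(ε) = Σ_{k=1}^{n} (a_{k−1}(ε)/2) r^{k−1} ε_k` (0-based: sum over `k < n`). -/
def fN (r : ℝ) (A : ℕ → (ℕ → Bool) → ℝ) (n : ℕ) (ε : ℕ → Bool) : ℝ :=
  ∑ k ∈ Finset.range n, A k ε / 2 * r ^ k * sgn (ε k)

/-- A word of length `n` (element of `𝓔_n`), extended to an infinite word by `false`. -/
def extWord (n : ℕ) (σ : Fin n → Bool) : ℕ → Bool :=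
  fun k => if h : k < n then σ ⟨k, h⟩ else false

/-- The word `ε̂ = (ε_1, …, ε_{n−1})` obtained by deleting the last letter of `ε ∈ 𝓔_n`. -/
def parentWord (n : ℕ) (σ : Fin n → Bool) : Fin (n - 1) → Bool :=
  fun i => σ (Fin.castLE (Nat.sub_le n 1) i)

/-- The word `ε′s ∈ 𝓔_n` obtained by extending `ε′ ∈ 𝓔_{n−1}` by the letter `s` in
position `n`. -/
def childWord (n : ℕ) (σ' : Fin (n - 1) → Bool) (s : Bool) : Fin n → Bool :=
  fun i => if h : (i : ℕ) < n - 1 then σ' ⟨i, h⟩ else s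

lemma sgn_abs (b : Bool) : |sgn b| = 1 := by cases b <;> simp [sgn]

lemma extWord_lt {n : ℕ} (σ : Fin n → Bool) {k : ℕ} (h : k < n) :
    extWord n σ k = σ ⟨k, h⟩ := dif_pos h

/-- Geometric tail bound. -/
lemma geom_tail {r : ℝ} (hr0 : 0 ≤ r) (hr1 : r < 1) (s t : ℕ) :
    ∑ j ∈ Finset.Ico s t, r ^ j ≤ r ^ s / (1 - r) := by
  have h1 : (0:ℝ) < 1 - r := by linarith
  rw [Finset.sum_Ico_eq_sum_range]
  have : ∀ i ∈ Finset.range (t - s), r ^ (s + i) = r ^ s * r ^ i := by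
    intro i _; rw [pow_add]
  rw [Finset.sum_congr rfl this, ← Finset.mul_sum]
  rw [div_eq_mul_inv, ← one_div]
  have hgeom : ∑ i ∈ Finset.range (t - s), r ^ i ≤ 1 / (1 - r) := by
    have h := mul_neg_geom_sum r (t - s)
    have hp : (0:ℝ) ≤ r ^ (t - s) := pow_nonneg hr0 _
    rw [le_div_iff₀ h1, mul_comm]
    nlinarith
  exact mul_le_mul_of_nonneg_left hgeom (pow_nonneg hr0 _)

/-- The two-point log lemma. -/
lemma log_pair {d c : ℝ} (hc : 0 < c) (hcd : c < |d|) :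
    |(Real.log |d + c| - Real.log |d|) + (Real.log |d - c| - Real.log |d|)|
      ≤ c ^ 2 / (d ^ 2 - c ^ 2) := by
  have hd0 : d ≠ 0 := by intro h; rw [h, abs_zero] at hcd; linarith
  have hdc2 : c ^ 2 < d ^ 2 := by
    have := sq_abs d
    nlinarith [abs_nonneg d]
  have hpos : 0 < d ^ 2 - c ^ 2 := by linarith
  have hdp : d + c ≠ 0 := by
    intro h
    have : d = -c := by linarith
    rw [this, abs_neg, abs_of_pos hc] at hcd; linarith
  have hdm : d - c ≠ 0 := by
    intro h
    have : d = c := by linarith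
    rw [this, abs_of_pos hc] at hcd; linarith
  have h1 : Real.log |d + c| + Real.log |d - c| = Real.log (d ^ 2 - c ^ 2) := by
    rw [← Real.log_mul (abs_ne_zero.mpr hdp) (abs_ne_zero.mpr hdm), ← abs_mul]
    congr 1
    rw [abs_of_pos (by nlinarith : (0:ℝ) < (d + c) * (d - c))]
    ring
  have h2 : 2 * Real.log |d| = Real.log (d ^ 2) := by
    rw [show d ^ 2 = |d| ^ 2 from (sq_abs d).symm, Real.log_pow]
    push_cast; ring
  have key : (Real.log |d + c| - Real.log |d|) + (Real.log |d - c| - Real.log |d|)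
      = Real.log (d ^ 2 - c ^ 2) - Real.log (d ^ 2) := by
    rw [← h1, ← h2]; ring
  rw [key]
  have hd2 : (0:ℝ) < d ^ 2 := by positivity
  have hle : Real.log (d ^ 2 - c ^ 2) - Real.log (d ^ 2) ≤ 0 := by
    have := (Real.log_le_log_iff (by linarith : (0:ℝ) < d ^ 2 - c ^ 2) (by positivity : (0:ℝ) < d ^ 2)).mpr (by nlinarith)
    linarith
  rw [abs_of_nonpos hle, neg_sub]
  have h3 : Real.log (d ^ 2) - Real.log (d ^ 2 - c ^ 2) = Real.log (d ^ 2 / (d ^ 2 - c ^ 2)) := by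
    rw [Real.log_div (by positivity) (by positivity)]
  rw [h3]
  have h4 := Real.log_le_sub_one_of_pos (show (0:ℝ) < d ^ 2 / (d ^ 2 - c ^ 2) by positivity)
  have h5 : d ^ 2 / (d ^ 2 - c ^ 2) - 1 = c ^ 2 / (d ^ 2 - c ^ 2) := by
    field_simp
    ring
  linarith [h4, h5.symm.le]



noncomputable section

lemma child_eval {r : ℝ} {A : ℕ → (ℕ → Bool) → ℝ} {m : ℕ}
    (hAdep : ∀ k, k ≤ m → ∀ ε ε', (∀ j < k, ε j = ε' j) → A k ε = A k ε')
    (σ' : Fin m → Bool) (s : Bool) :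
    fN r A (m + 1) (extWord (m + 1) (childWord (m + 1) σ' s))
      = fN r A m (extWord m σ') + A m (extWord m σ') / 2 * r ^ m * sgn s := by
  set E := extWord (m + 1) (childWord (m + 1) σ' s) with hEdef
  have hE : ∀ j, j < m → E j = extWord m σ' j := by
    intro j hj
    have h1 : j < m + 1 := by omega
    simp only [hEdef, extWord, childWord, dif_pos h1, dif_pos hj]
    exact dif_pos hj
  have hEm : E m = s := by
    simp only [hEdef, extWord, childWord, dif_pos (Nat.lt_succ_self m)]
    simp
  unfold fN
  rw [Finset.sum_range_succ]
  congr 1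
  · apply Finset.sum_congr rfl
    intro k hk
    rw [Finset.mem_range] at hk
    have hA : A k E = A k (extWord m σ') :=
      hAdep k hk.le _ _ (fun j hj => hE j (lt_trans hj hk))
    rw [hA, hE k hk]
  · have hA : A m E = A m (extWord m σ') := hAdep m le_rfl _ _ (fun j hj => hE j hj)
    rw [hA, hEm]

lemma dist_lower {a r : ℝ} (ha1 : 1 ≤ a) (hr0 : 0 < r) (hr1 : r < 1)
    {A : ℕ → (ℕ → Bool) → ℝ} {m : ℕ}
    (hAbd : ∀ k, k ≤ m → ∀ ε, 1 ≤ A k ε ∧ A k ε ≤ a)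
    (hAdep : ∀ k, k ≤ m → ∀ ε ε', (∀ j < k, ε j = ε' j) → A k ε = A k ε')
    (u v : ℕ → Bool) (k : ℕ) (hk : k < m)
    (hlt : ∀ j < k, u j = v j) (hne : u k ≠ v k) :
    r ^ k * (1 - a * r / (1 - r)) ≤ |fN r A m u - fN r A (m + 1) v| := by
  have h1r : (0:ℝ) < 1 - r := by linarith
  set g : ℕ → ℝ := fun j => A j u / 2 * r ^ j * sgn (u j) - A j v / 2 * r ^ j * sgn (v j)
    with hgdef
  set t : ℝ := A m v / 2 * r ^ m * sgn (v m) with htdef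
  have hsplit : fN r A m u - fN r A (m + 1) v = (∑ j ∈ Finset.range m, g j) - t := by
    simp only [hgdef, htdef]
    unfold fN
    rw [Finset.sum_range_succ, Finset.sum_sub_distrib]
    ring
  have hg0 : ∀ j < k, g j = 0 := by
    intro j hj
    have hA : A j u = A j v := hAdep j (by omega) _ _ (fun i hi => hlt i (by omega))
    have := hlt j hj
    simp [hgdef, hA, this]
  have habs : ∀ (w : ℕ → Bool) (j : ℕ), j ≤ m → |A j w / 2 * r ^ j * sgn (w j)| ≤ a / 2 * r ^ j := by
    intro w j hj
    obtain ⟨h1, h2⟩ := hAbd j hj w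
    rw [abs_mul, sgn_abs, mul_one, abs_mul, abs_of_nonneg (by linarith : (0:ℝ) ≤ A j w / 2),
      abs_of_nonneg (le_of_lt (pow_pos hr0 j))]
    have : (0:ℝ) ≤ r ^ j := le_of_lt (pow_pos hr0 j)
    nlinarith
  have hgj : ∀ j, j ≤ m → |g j| ≤ a * r ^ j := by
    intro j hj
    calc |g j| ≤ |A j u / 2 * r ^ j * sgn (u j)| + |A j v / 2 * r ^ j * sgn (v j)| :=
          abs_sub _ _
      _ ≤ a / 2 * r ^ j + a / 2 * r ^ j := add_le_add (habs u j hj) (habs v j hj)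
      _ = a * r ^ j := by ring
  have hgk : r ^ k ≤ |g k| := by
    obtain ⟨h1u, _⟩ := hAbd k hk.le u
    obtain ⟨h1v, _⟩ := hAbd k hk.le v
    have hrk : (0:ℝ) < r ^ k := pow_pos hr0 k
    cases hu : u k <;> cases hv : v k
    · exact absurd (hu.trans hv.symm) hne
    · have : g k = -((A k u + A k v) / 2 * r ^ k) := by
        simp [hgdef, hu, hv, sgn]; ring
      rw [this, abs_neg, abs_of_nonneg (by nlinarith)]
      nlinarith
    · have : g k = (A k u + A k v) / 2 * r ^ k := by
        simp [hgdef, hu, hv, sgn]; ring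
      rw [this, abs_of_nonneg (by nlinarith)]
      nlinarith
    · exact absurd (hu.trans hv.symm) hne
  have hkm : k ∈ Finset.range m := Finset.mem_range.mpr hk
  have e1 : ∑ j ∈ Finset.range m, g j = g k + ∑ j ∈ (Finset.range m).erase k, g j :=
    (Finset.add_sum_erase _ _ hkm).symm
  have e2 : ∑ j ∈ (Finset.range m).erase k, |g j| = ∑ j ∈ Finset.Ico (k+1) m, |g j| := by
    symm
    apply Finset.sum_subset
    · intro j hj
      rw [Finset.mem_Ico] at hj
      exact Finset.mem_erase.mpr ⟨by omega, Finset.mem_range.mpr hj.2⟩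
    · intro j hj hnj
      rw [Finset.mem_erase, Finset.mem_range] at hj
      rw [Finset.mem_Ico] at hnj
      have : j < k := by omega
      rw [hg0 j this, abs_zero]
  have hbound : ∑ j ∈ (Finset.range m).erase k, |g j| + |t|
      ≤ a * (r ^ (k+1) / (1 - r)) := by
    rw [e2]
    have hstep : ∑ j ∈ Finset.Ico (k+1) m, |g j| + |t|
        ≤ ∑ j ∈ Finset.Ico (k+1) (m+1), (a * r ^ j) := by
      rw [Finset.sum_Ico_succ_top (by omega : k + 1 ≤ m)]
      apply add_le_add
      · apply Finset.sum_le_sum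
        intro j hj
        rw [Finset.mem_Ico] at hj
        exact hgj j (by omega)
      · calc |t| ≤ a / 2 * r ^ m := habs v m le_rfl
          _ ≤ a * r ^ m := by nlinarith [pow_pos hr0 m]
    refine hstep.trans ?_
    rw [← Finset.mul_sum]
    have := geom_tail hr0.le hr1 (k+1) (m+1)
    have ha0 : (0:ℝ) ≤ a := by linarith
    exact mul_le_mul_of_nonneg_left this ha0
  have htri : |g k| - (∑ j ∈ (Finset.range m).erase k, |g j| + |t|)
      ≤ |fN r A m u - fN r A (m + 1) v| := by
    rw [hsplit, e1]
    have h2 : |(∑ j ∈ (Finset.range m).erase k, g j) - t|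
        ≤ ∑ j ∈ (Finset.range m).erase k, |g j| + |t| :=
      (abs_sub _ _).trans (add_le_add_left (Finset.abs_sum_le_sum_abs _ _) _)
    have h3 : |g k| - |(∑ j ∈ (Finset.range m).erase k, g j) - t|
        ≤ |g k + ((∑ j ∈ (Finset.range m).erase k, g j) - t)| := by
      have := abs_add_le (g k + ((∑ j ∈ (Finset.range m).erase k, g j) - t))
        (-((∑ j ∈ (Finset.range m).erase k, g j) - t))
      simp only [add_neg_cancel_right, abs_neg] at this
      linarith
    calc |g k| - (∑ j ∈ (Finset.range m).erase k, |g j| + |t|)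
        ≤ |g k| - |(∑ j ∈ (Finset.range m).erase k, g j) - t| := by linarith
      _ ≤ |g k + ((∑ j ∈ (Finset.range m).erase k, g j) - t)| := h3
      _ = |g k + ∑ j ∈ (Finset.range m).erase k, g j - t| :=
          congrArg abs (add_sub_assoc _ _ _).symm
  calc r ^ k * (1 - a * r / (1 - r)) = r ^ k - a * (r ^ (k+1) / (1 - r)) := by
        field_simp; ring
    _ ≤ |g k| - (∑ j ∈ (Finset.range m).erase k, |g j| + |t|) := by linarith
    _ ≤ |fN r A m u - fN r A (m + 1) v| := htri


set_option maxHeartbeats 2000000 in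
/-- With `a ∈ [1,3]`, `r ∈ (0,1/16]`, coefficients `a_k(ε) ∈ [1,a]` (depending
only on the first `k` letters, `a_0 ≡ 1`) for `k ≤ n−1`, `x = f_n(ε) ∈ K_n`, and
`ε̂ = (ε_1,…,ε_{n−1})`, the quantity
`Δ₃ = Σ_{ε′ ∈ 𝓔_{n−1}, ε′ ≠ ε̂} Σ_{s ∈ {−1,1}} ( ln|f_n(ε′s) − x| − ln|f_{n−1}(ε′) − x| )`
satisfies `|Δ₃| ≤ Σ_{ℓ=1}^{n−1} 2^{ℓ−1} a² r^{2ℓ} / ( 4(1 − ar/(1−r))² − a² r^{2ℓ} )`. -/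
theorem stmt5 (a r : ℝ) (ha1 : 1 ≤ a) (ha3 : a ≤ 3) (hr0 : 0 < r) (hr1 : r ≤ 1 / 16)
    (n : ℕ) (hn : 1 ≤ n)
    (A : ℕ → (ℕ → Bool) → ℝ)
    (hA0 : ∀ ε, A 0 ε = 1)
    (hAbd : ∀ k, k ≤ n - 1 → ∀ ε, 1 ≤ A k ε ∧ A k ε ≤ a)
    (hAdep : ∀ k, k ≤ n - 1 → ∀ ε ε', (∀ j < k, ε j = ε' j) → A k ε = A k ε')
    (σ : Fin n → Bool) (x Δ₃ : ℝ)
    (hx : x = fN r A n (extWord n σ))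
    (hΔ₃ : Δ₃ = ∑ σ' ∈ Finset.univ.erase (parentWord n σ), ∑ s : Bool,
        (Real.log |fN r A n (extWord n (childWord n σ' s)) - x| -
          Real.log |fN r A (n - 1) (extWord (n - 1) σ') - x|)) :
    |Δ₃| ≤ ∑ ℓ ∈ Finset.Icc 1 (n - 1),
        (2 : ℝ) ^ (ℓ - 1) * a ^ 2 * r ^ (2 * ℓ) /
          (4 * (1 - a * r / (1 - r)) ^ 2 - a ^ 2 * r ^ (2 * ℓ)) := by
  obtain ⟨m, rfl⟩ : ∃ m, n = m + 1 := ⟨n - 1, (Nat.succ_pred_eq_of_pos hn).symm⟩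
  simp only [Nat.add_sub_cancel] at hAbd hAdep hΔ₃ ⊢
  set τ : Fin m → Bool := parentWord (m + 1) σ with hτdef
  -- numeric facts
  have hr1' : r < 1 := lt_of_le_of_lt hr1 (by norm_num)
  have h1r : (0:ℝ) < 1 - r := by linarith
  set D : ℝ := 1 - a * r / (1 - r) with hDdef
  have hDr : D = 1 - a * r / (1 - r) := hDdef
  clear_value D
  have hD : (4:ℝ)/5 ≤ D := by
    rw [hDr]
    have h : a * r / (1 - r) ≤ 1/5 := by
      rw [div_le_iff₀ h1r]; nlinarith
    linarith
  set B : ℕ → ℝ := fun ℓ => a ^ 2 * r ^ (2 * ℓ) / (4 * D ^ 2 - a ^ 2 * r ^ (2 * ℓ)) with hBdef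
  clear_value B
  have hnum_le : ∀ ℓ : ℕ, 1 ≤ ℓ → a ^ 2 * r ^ (2 * ℓ) ≤ 9 / 256 := by
    intro ℓ hℓ
    have h1 : r ^ (2 * ℓ) ≤ r ^ 2 :=
      pow_le_pow_of_le_one hr0.le hr1'.le (by omega)
    have h2 : r ^ 2 ≤ (1/16)^2 := by nlinarith
    nlinarith [pow_nonneg hr0.le (2 * ℓ)]
  have hden_pos : ∀ ℓ : ℕ, 1 ≤ ℓ → (0:ℝ) < 4 * D ^ 2 - a ^ 2 * r ^ (2 * ℓ) := by
    intro ℓ hℓ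
    have := hnum_le ℓ hℓ
    nlinarith [mul_self_nonneg (D - 4/5)]
  have hBpos : ∀ ℓ : ℕ, 1 ≤ ℓ → 0 ≤ B ℓ := by
    intro ℓ hℓ
    have h1 := hden_pos ℓ hℓ
    have h2 : (0:ℝ) ≤ a ^ 2 * r ^ (2 * ℓ) := by positivity
    rw [hBdef]
    exact div_nonneg h2 h1.le
  -- the first-difference index
  set kk : (Fin m → Bool) → ℕ :=
    fun σ' => sInf {j | extWord m σ' j ≠ extWord m τ j} with hkkdef
  have tau_ext : ∀ j, j < m → extWord m τ j = extWord (m + 1) σ j := by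
    intro j hj
    have hj1 : j < m + 1 := by omega
    rw [extWord_lt τ hj, extWord_lt σ hj1]
    rfl
  have hkprop : ∀ σ' ∈ Finset.univ.erase τ,
      kk σ' < m ∧ extWord m σ' (kk σ') ≠ extWord m τ (kk σ') ∧
        ∀ j < kk σ', extWord m σ' j = extWord m τ j := by
    intro σ' hσ'
    have hne : σ' ≠ τ := (Finset.mem_erase.mp hσ').1
    obtain ⟨i, hi⟩ : ∃ i, σ' i ≠ τ i := by
      by_contra h; push_neg at h; exact hne (funext h)
    have hmem : (i : ℕ) ∈ {j | extWord m σ' j ≠ extWord m τ j} := by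
      have h1 : extWord m σ' i = σ' i := by rw [extWord_lt σ' i.isLt]
      have h2 : extWord m τ i = τ i := by rw [extWord_lt τ i.isLt]
      simp only [Set.mem_setOf_eq, h1, h2]
      exact hi
    have h1 := Nat.sInf_mem (Set.nonempty_of_mem hmem)
    have h2 : kk σ' ≤ (i : ℕ) := Nat.sInf_le hmem
    refine ⟨lt_of_le_of_lt h2 i.isLt, h1, fun j hj => ?_⟩
    by_contra hc
    exact Nat.notMem_of_lt_sInf hj hc
  -- per-word bound
  have main : ∀ σ' ∈ Finset.univ.erase τ,
      |∑ s : Bool, (Real.log |fN r A (m + 1) (extWord (m + 1) (childWord (m + 1) σ' s)) - x| -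
          Real.log |fN r A m (extWord m σ') - x|)| ≤ B (m - kk σ') := by
    intro σ' hσ'
    obtain ⟨hkm, hkne, hklt⟩ := hkprop σ' hσ'
    set k := kk σ' with hkdef
    clear_value k
    set d : ℝ := fN r A m (extWord m σ') - x with hddef
    clear_value d
    have hdist : r ^ k * D ≤ |d| := by
      rw [hddef, hx, hDr]
      apply dist_lower ha1 hr0 hr1' hAbd hAdep (extWord m σ') (extWord (m + 1) σ) k hkm
      · intro j hj
        rw [hklt j hj, tau_ext j (lt_trans hj hkm)]
      · rw [← tau_ext k hkm]
        exact hkne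
    set c : ℝ := A m (extWord m σ') / 2 * r ^ m with hcdef
    clear_value c
    obtain ⟨hc1, hc2⟩ := hAbd m le_rfl (extWord m σ')
    have hrm : (0:ℝ) < r ^ m := pow_pos hr0 m
    have hrk : (0:ℝ) < r ^ k := pow_pos hr0 k
    have hcpos : 0 < c := by rw [hcdef]; nlinarith
    have hcub : c ≤ a / 2 * r ^ m := by rw [hcdef]; nlinarith
    have hmk : r ^ m ≤ r ^ (k + 1) :=
      pow_le_pow_of_le_one hr0.le hr1'.le (by omega)
    have hcd : c < |d| := by
      have h1 : c ≤ a / 2 * (r * r ^ k) := by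
        have : r ^ (k + 1) = r * r ^ k := by ring
        nlinarith
      have har : a / 2 * r ≤ 3/32 := by nlinarith
      have h2 : a / 2 * (r * r ^ k) < (4/5) * r ^ k := by nlinarith [hrk, mul_le_mul_of_nonneg_right har hrk.le]
      have h3 : (4/5) * r ^ k ≤ D * r ^ k := by nlinarith
      calc c ≤ a / 2 * (r * r ^ k) := h1
        _ < (4/5) * r ^ k := h2
        _ ≤ D * r ^ k := h3
        _ = r ^ k * D := by ring
        _ ≤ |d| := hdist
    have e_t : fN r A (m + 1) (extWord (m + 1) (childWord (m + 1) σ' true)) - x = d + c := by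
      rw [child_eval hAdep σ' true, hddef, hcdef]; simp only [sgn, if_true]; ring
    have e_f : fN r A (m + 1) (extWord (m + 1) (childWord (m + 1) σ' false)) - x = d - c := by
      rw [child_eval hAdep σ' false, hddef, hcdef]; simp only [sgn, Bool.false_eq_true, if_false]; ring
    have hsum : ∑ s : Bool, (Real.log |fN r A (m + 1) (extWord (m + 1) (childWord (m + 1) σ' s)) - x| -
          Real.log |d|)
        = (Real.log |d + c| - Real.log |d|) + (Real.log |d - c| - Real.log |d|) := by
      rw [Fintype.sum_bool, e_t, e_f]
      try ring
    rw [hsum]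
    have hlog := log_pair hcpos hcd
    refine hlog.trans ?_
    -- numeric comparison
    set ℓ := m - k with hℓdef
    clear_value ℓ
    have hℓ1 : 1 ≤ ℓ := by omega
    have h2m : 2 * m = 2 * k + 2 * ℓ := by omega
    have hrsplit : r ^ (2 * m) = r ^ (2 * k) * r ^ (2 * ℓ) := by
      rw [h2m, pow_add]
    have hd2 : r ^ (2 * k) * D ^ 2 ≤ d ^ 2 := by
      have h := hdist
      have h0 : (0:ℝ) ≤ r ^ k * D := by nlinarith
      have hpow : r ^ (2 * k) = r ^ k * r ^ k := by rw [two_mul, pow_add]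
      nlinarith [mul_le_mul h h h0 (abs_nonneg d), sq_abs d, hpow]
    have hc2' : c ^ 2 ≤ a ^ 2 * r ^ (2 * m) / 4 := by
      have hpow : r ^ (2 * m) = r ^ m * r ^ m := by rw [two_mul, pow_add]
      nlinarith [mul_le_mul hcub hcub hcpos.le (by positivity : (0:ℝ) ≤ a / 2 * r ^ m), hpow]
    have hdc2 : c ^ 2 < d ^ 2 := by
      have := sq_abs d
      nlinarith [abs_nonneg d]
    have hMpos : (0:ℝ) < r ^ (2 * k) * D ^ 2 - a ^ 2 * r ^ (2 * m) / 4 := by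
      have h1 := hnum_le ℓ hℓ1
      have h2 : (0:ℝ) < r ^ (2 * k) := pow_pos hr0 _
      have h3 : (0:ℝ) < D ^ 2 - a ^ 2 * r ^ (2 * ℓ) / 4 := by
        nlinarith [mul_self_nonneg (D - 4/5)]
      rw [hrsplit]
      nlinarith [mul_pos h2 h3]
    have step : c ^ 2 / (d ^ 2 - c ^ 2)
        ≤ (a ^ 2 * r ^ (2 * m) / 4) / (r ^ (2 * k) * D ^ 2 - a ^ 2 * r ^ (2 * m) / 4) := by
      exact div_le_div₀ (by positivity) hc2' hMpos (by linarith)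
    refine step.trans (le_of_eq ?_)
    rw [hBdef]
    have hden := hden_pos ℓ hℓ1
    rw [hrsplit, div_eq_div_iff (by rw [← hrsplit]; exact hMpos.ne') hden.ne']
    ring
  -- counting stage
  classical
  have hcard : ∀ ℓ ∈ Finset.Icc 1 m,
      ((Finset.univ.erase τ).filter (fun σ' => m - kk σ' = ℓ)).card ≤ 2 ^ (ℓ - 1) := by
    intro ℓ hℓ
    rw [Finset.mem_Icc] at hℓ
    obtain ⟨hℓ1, hℓm⟩ := hℓ
    set Φ : (Fin m → Bool) → (Fin (ℓ - 1) → Bool) :=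
      fun σ' i => σ' ⟨m - ℓ + 1 + (i : ℕ), by have := i.isLt; omega⟩ with hΦdef
    have ext_eq : ∀ (w1 w2 : Fin m → Bool) (i : Fin m),
        extWord m w1 (i : ℕ) = extWord m w2 (i : ℕ) → w1 i = w2 i := by
      intro w1 w2 i h
      rw [extWord_lt w1 i.isLt, extWord_lt w2 i.isLt] at h
      exact h
    have ext_ne : ∀ (w1 w2 : Fin m → Bool) (i : Fin m),
        extWord m w1 (i : ℕ) ≠ extWord m w2 (i : ℕ) → w1 i ≠ w2 i := by
      intro w1 w2 i h hc
      apply h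
      rw [extWord_lt w1 i.isLt, extWord_lt w2 i.isLt]
      exact hc
    have hinj : Set.InjOn Φ ↑((Finset.univ.erase τ).filter (fun σ' => m - kk σ' = ℓ)) := by
      intro σ1 h1 σ2 h2 hΦ
      rw [Finset.coe_filter, Set.mem_setOf_eq] at h1 h2
      obtain ⟨hm1, he1⟩ := h1
      obtain ⟨hm2, he2⟩ := h2
      obtain ⟨hk1, hkne1, hklt1⟩ := hkprop σ1 hm1
      obtain ⟨hk2, hkne2, hklt2⟩ := hkprop σ2 hm2
      have hkeq1 : kk σ1 = m - ℓ := by omega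
      have hkeq2 : kk σ2 = m - ℓ := by omega
      funext i
      rcases lt_trichotomy (i : ℕ) (m - ℓ) with hlt | heq | hgt
      · have e1 : σ1 i = τ i := ext_eq _ _ _ (hklt1 (i : ℕ) (by omega))
        have e2 : σ2 i = τ i := ext_eq _ _ _ (hklt2 (i : ℕ) (by omega))
        rw [e1, e2]
      · have hieq : i = (⟨m - ℓ, by omega⟩ : Fin m) := Fin.ext heq
        have e1 : σ1 i ≠ τ i := by
          apply ext_ne
          rw [heq, ← hkeq1]
          exact hkne1
        have e2 : σ2 i ≠ τ i := by
          apply ext_ne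
          rw [heq, ← hkeq2]
          exact hkne2
        revert e1 e2
        cases σ1 i <;> cases σ2 i <;> cases τ i <;> simp
      · have hq : (i : ℕ) - (m - ℓ) - 1 < ℓ - 1 := by have := i.isLt; omega
        have := congrFun hΦ ⟨(i : ℕ) - (m - ℓ) - 1, hq⟩
        simp only [hΦdef] at this
        have hval : (⟨m - ℓ + 1 + ((i : ℕ) - (m - ℓ) - 1), by have := i.isLt; omega⟩ : Fin m) = i :=
          Fin.ext (by simp; omega)
        rwa [hval] at this
    calc ((Finset.univ.erase τ).filter (fun σ' => m - kk σ' = ℓ)).card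
        ≤ (Finset.univ : Finset (Fin (ℓ - 1) → Bool)).card :=
          Finset.card_le_card_of_injOn Φ (fun _ _ => Finset.mem_univ _) hinj
      _ = 2 ^ (ℓ - 1) := by simp
  rw [hΔ₃]
  calc |∑ σ' ∈ Finset.univ.erase τ, ∑ s : Bool,
        (Real.log |fN r A (m + 1) (extWord (m + 1) (childWord (m + 1) σ' s)) - x| -
          Real.log |fN r A m (extWord m σ') - x|)|
      ≤ ∑ σ' ∈ Finset.univ.erase τ, |∑ s : Bool,
        (Real.log |fN r A (m + 1) (extWord (m + 1) (childWord (m + 1) σ' s)) - x| -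
          Real.log |fN r A m (extWord m σ') - x|)| := Finset.abs_sum_le_sum_abs _ _
    _ ≤ ∑ σ' ∈ Finset.univ.erase τ, B (m - kk σ') := Finset.sum_le_sum main
    _ = ∑ ℓ ∈ Finset.Icc 1 m, ∑ σ' ∈ (Finset.univ.erase τ).filter (fun σ' => m - kk σ' = ℓ),
          B (m - kk σ') := by
        symm
        apply Finset.sum_fiberwise_of_maps_to
        intro σ' hσ'
        have := (hkprop σ' hσ').1
        rw [Finset.mem_Icc]
        omega
    _ ≤ ∑ ℓ ∈ Finset.Icc 1 m, (2 : ℝ) ^ (ℓ - 1) * B ℓ := by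
        apply Finset.sum_le_sum
        intro ℓ hℓ
        rw [Finset.mem_Icc] at hℓ
        have hEq : ∀ σ' ∈ (Finset.univ.erase τ).filter (fun σ' => m - kk σ' = ℓ),
            B (m - kk σ') = B ℓ := fun σ' h => by rw [(Finset.mem_filter.mp h).2]
        rw [Finset.sum_congr rfl hEq, Finset.sum_const, nsmul_eq_mul]
        have hc := hcard ℓ (Finset.mem_Icc.mpr hℓ)
        have hc2 : (((Finset.univ.erase τ).filter (fun σ' => m - kk σ' = ℓ)).card : ℝ)
            ≤ (2 : ℝ) ^ (ℓ - 1) := by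
          calc (((Finset.univ.erase τ).filter (fun σ' => m - kk σ' = ℓ)).card : ℝ)
              ≤ ((2 ^ (ℓ - 1) : ℕ) : ℝ) := by exact_mod_cast hc
            _ = (2 : ℝ) ^ (ℓ - 1) := by push_cast; ring
        exact mul_le_mul_of_nonneg_right hc2 (hBpos ℓ hℓ.1)
    _ = ∑ ℓ ∈ Finset.Icc 1 m, (2 : ℝ) ^ (ℓ - 1) * a ^ 2 * r ^ (2 * ℓ) /
          (4 * D ^ 2 - a ^ 2 * r ^ (2 * ℓ)) := by
        apply Finset.sum_congr rfl
        intro ℓ _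
        rw [hBdef]
        ring

end
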